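/- Let α and l be natural numbers and let L_l^α denote the generalized Laguerre polynomial of degree l and order α. Then ∫₀^∞ e^{−y/2} · L_l^α(y) · y^α dy = (−1)^l · 2^{α+1} · (l+α)! / l!. -/

import Mathlib

open MeasureTheory

/-- The generalized Laguerre polynomial of degree `l` and order `α`:
`L_l^α(x) = Σ_{j=0}^{l} binom(l+α, l−j) (−x)^j / j!`. -/
noncomputable def laguerre (l α : ℕ) (x : ℝ) : ℝ :=
  ∑ j ∈ Finset.range (l + 1),
    (Nat.choose (l + α) (l - j) : ℝ) * (-x) ^ j / (j.factorial : ℝ)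

open Set Real
lemma aux_integrable (n : ℕ) :
    IntegrableOn (fun y : ℝ => Real.exp (-y/2) * y ^ n) (Set.Ioi 0) := by
  have := integrableOn_rpow_mul_exp_neg_mul_rpow (p := 1) (s := n) (b := 1/2)
    (by exact_mod_cast neg_one_lt_zero.trans_le (Nat.cast_nonneg n)) zero_lt_one (by norm_num)
  refine (this.congr_fun (fun x hx => ?_) measurableSet_Ioi)
  simp [Real.rpow_natCast, Real.rpow_one, mul_comm, neg_div, div_eq_inv_mul, mul_comm]

lemma aux_integral (n : ℕ) :
    ∫ y in Set.Ioi (0:ℝ), Real.exp (-y/2) * y ^ n = (n.factorial : ℝ) * 2 ^ (n+1) := by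
  have h := integral_rpow_mul_exp_neg_mul_Ioi (a := (n:ℝ)+1) (r := 1/2)
    (by positivity) (by norm_num)
  rw [show ((n:ℝ)+1) - 1 = (n:ℝ) by ring] at h
  simp_rw [Real.rpow_natCast] at h
  rw [Real.Gamma_nat_eq_factorial] at h
  calc ∫ y in Set.Ioi (0:ℝ), Real.exp (-y/2) * y ^ n
      = ∫ t in Set.Ioi (0:ℝ), t ^ n * Real.exp (-(1/2 * t)) := by
        refine setIntegral_congr_fun measurableSet_Ioi fun x _ => ?_
        rw [show -(1/2 * x) = -x/2 by ring, mul_comm]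
    _ = (1/(1/2):ℝ) ^ ((n:ℝ)+1) * (n.factorial : ℝ) := h
    _ = (n.factorial : ℝ) * 2 ^ (n+1) := by
        rw [show ((n:ℝ)+1) = ((n+1:ℕ):ℝ) by push_cast; ring, Real.rpow_natCast]
        norm_num; ring

lemma aux_choose (l α j : ℕ) (hj : j ≤ l) :
    (l+α).choose (l-j) * (j+α).factorial * l.factorial
      = l.choose j * (l+α).factorial * j.factorial := by
  have h1 := Nat.choose_mul_factorial_mul_factorial
    (show l - j ≤ l + α from le_trans (Nat.sub_le l j) (Nat.le_add_right l α))
  have h2 := Nat.choose_mul_factorial_mul_factorial hj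
  rw [show l + α - (l - j) = j + α by omega] at h1
  refine Nat.eq_of_mul_eq_mul_right (Nat.factorial_pos (l-j)) ?_
  calc (l+α).choose (l-j) * (j+α).factorial * l.factorial * (l-j).factorial
      = ((l+α).choose (l-j) * (l-j).factorial * (j+α).factorial) * l.factorial := by ring
    _ = (l+α).factorial * l.factorial := by rw [h1]
    _ = (l.choose j * j.factorial * (l-j).factorial) * (l+α).factorial := by rw [h2]; ring
    _ = l.choose j * (l+α).factorial * j.factorial * (l-j).factorial := by ring

/-- `∫₀^∞ e^{−y/2} L_l^α(y) y^α dy = (−1)^l 2^{α+1} (l+α)!/l!`. -/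
theorem integral_exp_neg_half_mul_laguerre (l α : ℕ) :
    (∫ y in Set.Ioi (0 : ℝ), Real.exp (-y / 2) * laguerre l α y * y ^ α) =
      (-1 : ℝ) ^ l * 2 ^ (α + 1) * ((l + α).factorial : ℝ) / (l.factorial : ℝ) := by
  have hl : (l.factorial : ℝ) ≠ 0 := Nat.cast_ne_zero.2 (Nat.factorial_ne_zero l)
  have hsum : ∑ j ∈ Finset.range (l+1), (-2:ℝ)^j * (l.choose j : ℝ) = (-1)^l := by
    have h := add_pow (-2:ℝ) 1 l
    simp only [one_pow, mul_one] at h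
    norm_num at h
    rw [← h]
  calc (∫ y in Set.Ioi (0 : ℝ), Real.exp (-y / 2) * laguerre l α y * y ^ α)
      = ∫ y in Set.Ioi (0 : ℝ), ∑ j ∈ Finset.range (l+1),
          ((l+α).choose (l-j) : ℝ) * (-1)^j / j.factorial * (Real.exp (-y/2) * y ^ (j+α)) := by
        refine setIntegral_congr_fun measurableSet_Ioi fun y _ => ?_
        simp only [laguerre, Finset.sum_mul, Finset.mul_sum]
        refine Finset.sum_congr rfl fun j _ => ?_
        rw [pow_add]; ring
    _ = ∑ j ∈ Finset.range (l+1), ((l+α).choose (l-j) : ℝ) * (-1)^j / j.factorial *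
          ∫ y in Set.Ioi (0:ℝ), Real.exp (-y/2) * y ^ (j+α) := by
        rw [integral_finset_sum _ (fun j _ => (aux_integrable (j+α)).const_mul _)]
        simp_rw [integral_const_mul]
    _ = ∑ j ∈ Finset.range (l+1), ((l+α).choose (l-j) : ℝ) * (-1)^j / j.factorial *
          (((j+α).factorial : ℝ) * 2 ^ (j+α+1)) := by simp_rw [aux_integral]
    _ = ∑ j ∈ Finset.range (l+1),
          ((-2:ℝ)^j * (l.choose j : ℝ)) * (2 ^ (α+1) * ((l+α).factorial : ℝ) / l.factorial) := by
        refine Finset.sum_congr rfl fun j hj => ?_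
        have hj' : j ≤ l := Nat.lt_succ_iff.mp (Finset.mem_range.mp hj)
        have key : ((l+α).choose (l-j) : ℝ) * (j+α).factorial * l.factorial
            = (l.choose j : ℝ) * (l+α).factorial * j.factorial := by
          exact_mod_cast congrArg (Nat.cast : ℕ → ℝ) (aux_choose l α j hj')
        have hje : (j.factorial : ℝ) ≠ 0 := Nat.cast_ne_zero.2 (Nat.factorial_ne_zero j)
        have key2 : ((l+α).choose (l-j) : ℝ) * (j+α).factorial / j.factorial
            = (l.choose j : ℝ) * (l+α).factorial / l.factorial := by
          rw [div_eq_div_iff hje hl]; linear_combination key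
        have hneg : (-2:ℝ)^j = (-1)^j * 2^j := by
          rw [show (-2:ℝ) = (-1)*2 by norm_num, mul_pow]
        rw [hneg]
        linear_combination ((-1:ℝ)^j * 2^(j+α+1)) * key2
    _ = (-1 : ℝ) ^ l * 2 ^ (α + 1) * ((l + α).factorial : ℝ) / (l.factorial : ℝ) := by
        rw [← Finset.sum_mul, hsum]; ring
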